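/- The critical group of an Adinkra is independent of the signature: if 𝒜 and 𝒜' are N-colored Adinkras with the same underlying colored graph but possibly different sign functions, then coker L(𝒜) ≅ coker L(𝒜'). -/

import Mathlib

open Matrix

/-- An `N`-colored Adinkra structure on a vertex set `V`: `nbr c u` is the unique
neighbor of `u` along the edge of color `c`, and `σ u w ∈ {±1}` is the sign of the
edge `uw`. The axioms say: each color class is a perfect matching (so every vertex
is incident to exactly one edge of each color, and the graph is simple), the graph
is bipartite and connected, every bi-colored subgraph is a disjoint union of
4-cycles, and every bi-colored 4-cycle has an odd number of negative edges. -/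
structure IsAdinkra {V : Type} [Fintype V] [DecidableEq V] (N : ℕ)
    (nbr : Fin N → V → V) (σ : V → V → ℤ) : Prop where
  invol : ∀ c u, nbr c (nbr c u) = u
  ne : ∀ c u, nbr c u ≠ u
  distinct : ∀ c c' u, c ≠ c' → nbr c u ≠ nbr c' u
  symm : ∀ u w, σ u w = σ w u
  sign_unit : ∀ u w, σ u w = 1 ∨ σ u w = -1
  bipartite : ∃ p : V → ZMod 2, ∀ c u, p (nbr c u) ≠ p u
  connected : (SimpleGraph.fromRel fun u w => ∃ c, nbr c u = w).Connected
  fourCycle : ∀ c c', c ≠ c' → ∀ u, nbr c (nbr c' (nbr c (nbr c' u))) = u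
  oddSign : ∀ c c', c ≠ c' → ∀ u,
    σ u (nbr c' u) * σ (nbr c' u) (nbr c (nbr c' u)) *
      σ (nbr c (nbr c' u)) (nbr c' (nbr c (nbr c' u))) *
      σ (nbr c' (nbr c (nbr c' u))) u = -1

/-- The signed adjacency matrix of an Adinkra. -/
def adinkraAdj {V : Type} [Fintype V] [DecidableEq V] {N : ℕ}
    (nbr : Fin N → V → V) (σ : V → V → ℤ) : Matrix V V ℤ :=
  Matrix.of fun u w => if ∃ c, nbr c u = w then σ u w else 0

/-- The signed Laplacian `L(𝒜) = N·I - A_σ` of an Adinkra. -/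
def adinkraLap {V : Type} [Fintype V] [DecidableEq V] {N : ℕ}
    (nbr : Fin N → V → V) (σ : V → V → ℤ) : Matrix V V ℤ :=
  (N : ℤ) • (1 : Matrix V V ℤ) - adinkraAdj nbr σ

namespace AdinkraProof

variable {V : Type} [Fintype V] [DecidableEq V] {N : ℕ}
  {nbr : Fin N → V → V} {σ σ' : V → V → ℤ}

lemma commute_nbr (hA : IsAdinkra N nbr σ) (c d : Fin N) (u : V) :
    nbr c (nbr d u) = nbr d (nbr c u) := by
  rcases eq_or_ne c d with rfl | h
  · rfl
  · have h4 := hA.fourCycle c d h u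
    have h1 : nbr d (nbr c (nbr d u)) = nbr c u := by
      have := congrArg (nbr c) h4
      rwa [hA.invol] at this
    have := congrArg (nbr d) h1
    rwa [hA.invol] at this

lemma sq1 (hA : IsAdinkra N nbr σ) (u w : V) : σ u w * σ u w = 1 := by
  rcases hA.sign_unit u w with h | h <;> rw [h] <;> norm_num

lemma sign_flip (hA : IsAdinkra N nbr σ) {d e : Fin N} (hde : d ≠ e) (u : V) :
    σ u (nbr d u) * σ (nbr d u) (nbr e (nbr d u)) =
      -(σ u (nbr e u) * σ (nbr e u) (nbr d (nbr e u))) := by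
  have hodd := hA.oddSign d e hde u
  have h1 : nbr e (nbr d (nbr e u)) = nbr d u := by
    rw [commute_nbr hA d e u, hA.invol]
  rw [h1] at hodd
  have h2 : σ (nbr d (nbr e u)) (nbr d u) = σ (nbr d u) (nbr e (nbr d u)) := by
    rw [commute_nbr hA d e u, hA.symm]
  have h3 : σ (nbr d u) u = σ u (nbr d u) := by rw [hA.symm]
  rw [h2, h3] at hodd
  rcases hA.sign_unit u (nbr d u) with ha | ha <;>
    rcases hA.sign_unit (nbr d u) (nbr e (nbr d u)) with hb | hb <;>
    rcases hA.sign_unit u (nbr e u) with hc | hc <;>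
    rcases hA.sign_unit (nbr e u) (nbr d (nbr e u)) with hd2 | hd2 <;>
    rw [ha, hb, hc, hd2] at hodd ⊢ <;> omega

/-- the product sign μ = σ σ' along the color-`c` edge at `u`, as a unit -/
noncomputable def mu (nbr : Fin N → V → V) (σ σ' : V → V → ℤ) (u : V) (c : Fin N) : ℤˣ :=
  if σ u (nbr c u) * σ' u (nbr c u) = 1 then 1 else -1

lemma coe_mu (hA : IsAdinkra N nbr σ) (hA' : IsAdinkra N nbr σ') (u : V) (c : Fin N) :
    ((mu nbr σ σ' u c : ℤˣ) : ℤ) = σ u (nbr c u) * σ' u (nbr c u) := by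
  unfold mu
  rcases hA.sign_unit u (nbr c u) with h | h <;>
    rcases hA'.sign_unit u (nbr c u) with h' | h' <;>
    rw [h, h'] <;> norm_num

lemma mu_symm (hA : IsAdinkra N nbr σ) (hA' : IsAdinkra N nbr σ') (u : V) (c : Fin N) :
    mu nbr σ σ' (nbr c u) c = mu nbr σ σ' u c := by
  unfold mu
  rw [hA.invol, hA.symm (nbr c u) u, hA'.symm (nbr c u) u]

lemma mu_square (hA : IsAdinkra N nbr σ) (hA' : IsAdinkra N nbr σ') (c d : Fin N) (u : V) :
    mu nbr σ σ' u d * mu nbr σ σ' (nbr d u) c = mu nbr σ σ' u c * mu nbr σ σ' (nbr c u) d := by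
  rcases eq_or_ne c d with rfl | hne
  · rfl
  · apply Units.ext
    push_cast [coe_mu hA hA']
    have h1 := sign_flip hA hne.symm u
    have h2 := sign_flip hA' hne.symm u
    have hcomm : nbr c (nbr d u) = nbr d (nbr c u) := commute_nbr hA c d u
    rw [hcomm] at h1 h2 ⊢
    linear_combination (σ' u (nbr d u) * σ' (nbr d u) (nbr d (nbr c u))) * h1 -
      (σ u (nbr c u) * σ (nbr c u) (nbr d (nbr c u))) * h2

/-- the lift of the color-`c` involution to the sign double cover -/
noncomputable def yc (hA : IsAdinkra N nbr σ) (hA' : IsAdinkra N nbr σ') (c : Fin N) :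
    Equiv.Perm (V × ℤˣ) :=
  Function.Involutive.toPerm (fun p => (nbr c p.1, mu nbr σ σ' p.1 c * p.2)) (by
    rintro ⟨u, s⟩
    simp only [hA.invol, mu_symm hA hA', Prod.mk.injEq]
    refine ⟨trivial, ?_⟩
    rw [← mul_assoc, Int.units_mul_self, one_mul])

lemma yc_apply (hA : IsAdinkra N nbr σ) (hA' : IsAdinkra N nbr σ') (c : Fin N) (u : V) (s : ℤˣ) :
    yc hA hA' c (u, s) = (nbr c u, mu nbr σ σ' u c * s) := rfl

lemma yc_comm (hA : IsAdinkra N nbr σ) (hA' : IsAdinkra N nbr σ') (c d : Fin N) :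
    Commute (yc hA hA' c) (yc hA hA' d) := by
  apply Equiv.ext
  rintro ⟨u, s⟩
  simp only [Equiv.Perm.mul_apply, yc_apply, commute_nbr hA c d u, Prod.mk.injEq]
  refine ⟨trivial, ?_⟩
  rw [← mul_assoc, ← mul_assoc, mul_comm (mu nbr σ σ' (nbr d u) c),
    mul_comm (mu nbr σ σ' (nbr c u) d), mu_square hA hA' c d u]

lemma yc_pow_pairwise (hA : IsAdinkra N nbr σ) (hA' : IsAdinkra N nbr σ') (f : Fin N → ℕ) :
    ((Finset.univ : Finset (Fin N)) : Set (Fin N)).Pairwise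
      (Function.onFun Commute fun c => yc hA hA' c ^ f c) :=
  fun a _ b _ _ => Commute.pow_pow (yc_comm hA hA' a b) _ _

/-- action of `(ZMod 2)^N` on the double cover -/
noncomputable def Tp (hA : IsAdinkra N nbr σ) (hA' : IsAdinkra N nbr σ')
    (w : Fin N → ZMod 2) : Equiv.Perm (V × ℤˣ) :=
  Finset.univ.noncommProd (fun c => yc hA hA' c ^ (w c).val)
    (yc_pow_pairwise hA hA' fun c => (w c).val)

lemma yc_sq (hA : IsAdinkra N nbr σ) (hA' : IsAdinkra N nbr σ') (c : Fin N) :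
    yc hA hA' c * yc hA hA' c = 1 := by
  apply Equiv.ext; rintro ⟨u, s⟩
  simp only [Equiv.Perm.mul_apply, yc_apply, hA.invol, mu_symm hA hA',
    Equiv.Perm.coe_one, id_eq, Prod.mk.injEq]
  exact ⟨trivial, by rw [← mul_assoc, Int.units_mul_self, one_mul]⟩

lemma Tp_add (hA : IsAdinkra N nbr σ) (hA' : IsAdinkra N nbr σ') (w w' : Fin N → ZMod 2) :
    Tp hA hA' (w + w') = Tp hA hA' w * Tp hA hA' w' := by
  have key : ∀ c : Fin N, yc hA hA' c ^ ((w + w') c).val =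
      yc hA hA' c ^ (w c).val * yc hA hA' c ^ (w' c).val := by
    intro c
    have h2 : ∀ a : ZMod 2, a = 0 ∨ a = 1 := by decide
    rcases h2 (w c) with ha | ha <;> rcases h2 (w' c) with hb | hb <;>
      rw [Pi.add_apply, ha, hb] <;>
      simp only [show ((0:ZMod 2)+0) = 0 from rfl, show ((0:ZMod 2)+1) = 1 from rfl,
        show ((1:ZMod 2)+0) = 1 from rfl, show ((1:ZMod 2)+1) = 0 from rfl,
        show (0:ZMod 2).val = 0 from rfl, show (1:ZMod 2).val = 1 from rfl,
        pow_zero, pow_one, one_mul, mul_one] <;>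
      first | rfl | exact (yc_sq hA hA' c).symm
  unfold Tp
  rw [Finset.noncommProd_congr rfl
    (g := fun c => yc hA hA' c ^ (w c).val * yc hA hA' c ^ (w' c).val) (fun c _ => key c)]
  exact Finset.noncommProd_mul_distrib _ _
    (fun a _ b _ _ => Commute.pow_pow (yc_comm hA hA' a b) _ _)
    (fun a _ b _ _ => Commute.pow_pow (yc_comm hA hA' a b) _ _)
    (fun a _ b _ _ => Commute.pow_pow (yc_comm hA hA' a b) _ _)

lemma Tp_single (hA : IsAdinkra N nbr σ) (hA' : IsAdinkra N nbr σ') (c : Fin N) :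
    Tp hA hA' (Pi.single c 1) = yc hA hA' c := by
  unfold Tp
  rw [← Finset.mul_noncommProd_erase (f := fun c' => yc hA hA' c' ^ ((Pi.single c 1 : Fin N → ZMod 2) c').val)
    Finset.univ (Finset.mem_univ c) _
    (fun a ha b hb hab => Commute.pow_pow (yc_comm hA hA' a b) _ _)]
  have h1 : ((Pi.single c 1 : Fin N → ZMod 2) c).val = 1 := by
    rw [Pi.single_eq_same]; rfl
  have h2 : (Finset.univ.erase c).noncommProd
      (fun c' => yc hA hA' c' ^ ((Pi.single c 1 : Fin N → ZMod 2) c').val)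
      ((yc_pow_pairwise hA hA' fun c' => ((Pi.single c 1 : Fin N → ZMod 2) c').val).mono
        (Finset.coe_subset.mpr (Finset.erase_subset c _))) = 1 := by
    rw [Finset.noncommProd_eq_pow_card _ _ _ 1, one_pow]
    intro x hx
    rw [Pi.single_eq_of_ne (Finset.ne_of_mem_erase hx), ZMod.val_zero, pow_zero]
  rw [h1, h2, pow_one, mul_one]

lemma Tp_zero (hA : IsAdinkra N nbr σ) (hA' : IsAdinkra N nbr σ') :
    Tp hA hA' 0 = 1 := by
  unfold Tp
  rw [Finset.noncommProd_eq_pow_card _ _ _ 1, one_pow]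
  intro x _
  rw [Pi.zero_apply, ZMod.val_zero, pow_zero]

/-- permutations of the cover that commute with deck transformation and cover a base map -/
def SCov (V : Type) [Fintype V] [DecidableEq V] : Submonoid (Equiv.Perm (V × ℤˣ)) where
  carrier := { π | ∃ g : V → V, ∃ t : V → ℤˣ, ∀ p : V × ℤˣ, π p = (g p.1, t p.1 * p.2) }
  mul_mem' := by
    rintro π₁ π₂ ⟨g₁, t₁, h₁⟩ ⟨g₂, t₂, h₂⟩
    exact ⟨g₁ ∘ g₂, fun v => t₁ (g₂ v) * t₂ v, by
      intro p
      simp only [Equiv.Perm.mul_apply, h₂, h₁, Function.comp_apply, mul_assoc]⟩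
  one_mem' := ⟨id, fun _ => 1, by simp⟩

lemma Tp_mem (hA : IsAdinkra N nbr σ) (hA' : IsAdinkra N nbr σ') (w : Fin N → ZMod 2) :
    Tp hA hA' w ∈ SCov V := by
  unfold Tp
  apply Submonoid.noncommProd_mem
  intro c _
  apply pow_mem
  exact ⟨fun u => nbr c u, fun u => mu nbr σ σ' u c, by rintro ⟨u, s⟩; rfl⟩

/-- the base action -/
noncomputable def Xb (hA : IsAdinkra N nbr σ) (hA' : IsAdinkra N nbr σ')
    (w : Fin N → ZMod 2) (u : V) : V := (Tp hA hA' w (u, 1)).1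

/-- the sign cocycle -/
noncomputable def Sg (hA : IsAdinkra N nbr σ) (hA' : IsAdinkra N nbr σ')
    (w : Fin N → ZMod 2) (u : V) : ℤˣ := (Tp hA hA' w (u, 1)).2

lemma Tp_apply (hA : IsAdinkra N nbr σ) (hA' : IsAdinkra N nbr σ') (w : Fin N → ZMod 2)
    (u : V) (s : ℤˣ) : Tp hA hA' w (u, s) = (Xb hA hA' w u, Sg hA hA' w u * s) := by
  obtain ⟨g, t, h⟩ := Tp_mem hA hA' w
  rw [h (u, s)]
  have h1 := h (u, 1)
  unfold Xb Sg
  rw [h1]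
  simp

lemma Xb_add (hA : IsAdinkra N nbr σ) (hA' : IsAdinkra N nbr σ') (w w' : Fin N → ZMod 2)
    (u : V) : Xb hA hA' (w + w') u = Xb hA hA' w (Xb hA hA' w' u) := by
  have h : Tp hA hA' (w + w') (u, 1) = Tp hA hA' w (Tp hA hA' w' (u, 1)) := by
    rw [Tp_add]; rfl
  rw [Tp_apply, Tp_apply, Tp_apply] at h
  simpa using congrArg Prod.fst h

lemma Sg_add (hA : IsAdinkra N nbr σ) (hA' : IsAdinkra N nbr σ') (w w' : Fin N → ZMod 2)
    (u : V) : Sg hA hA' (w + w') u = Sg hA hA' w (Xb hA hA' w' u) * Sg hA hA' w' u := by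
  have h : Tp hA hA' (w + w') (u, 1) = Tp hA hA' w (Tp hA hA' w' (u, 1)) := by
    rw [Tp_add]; rfl
  rw [Tp_apply, Tp_apply, Tp_apply] at h
  have := congrArg Prod.snd h
  simpa using this

lemma Xb_single (hA : IsAdinkra N nbr σ) (hA' : IsAdinkra N nbr σ') (c : Fin N) (u : V) :
    Xb hA hA' (Pi.single c 1) u = nbr c u := by
  unfold Xb; rw [Tp_single]; rfl

lemma Sg_single (hA : IsAdinkra N nbr σ) (hA' : IsAdinkra N nbr σ') (c : Fin N) (u : V) :
    Sg hA hA' (Pi.single c 1) u = mu nbr σ σ' u c := by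
  unfold Sg; rw [Tp_single, yc_apply, mul_one]

lemma Xb_zero (hA : IsAdinkra N nbr σ) (hA' : IsAdinkra N nbr σ') (u : V) :
    Xb hA hA' 0 u = u := by unfold Xb; rw [Tp_zero]; rfl

lemma Sg_zero (hA : IsAdinkra N nbr σ) (hA' : IsAdinkra N nbr σ') (u : V) :
    Sg hA hA' 0 u = 1 := by unfold Sg; rw [Tp_zero]; rfl

/-- induction along connectivity -/
lemma conn_ind (hA : IsAdinkra N nbr σ) (P : V → Prop)
    (step : ∀ v c, P v → P (nbr c v)) {v₀ : V} (h₀ : P v₀) (v : V) : P v := by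
  have key : ∀ (a b : V)
      (_ : (SimpleGraph.fromRel fun u w => ∃ c, nbr c u = w).Walk a b), P a → P b := by
    intro a b p
    induction p with
    | nil => exact id
    | cons hadj q ih =>
      intro ha
      apply ih
      rw [SimpleGraph.fromRel_adj] at hadj
      rename_i x y _
      rcases hadj.2 with ⟨d, hd⟩ | ⟨d, hd⟩
      · rw [← hd]; exact step x d ha
      · rw [← hd] at ha
        have := step _ d ha
        rwa [hA.invol] at this
  obtain ⟨p⟩ := hA.connected.preconnected v₀ v
  exact key v₀ v p h₀

lemma Xb_trans (hA : IsAdinkra N nbr σ) (hA' : IsAdinkra N nbr σ') (u v : V) :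
    ∃ w, Xb hA hA' w u = v := by
  refine conn_ind hA (fun v => ∃ w, Xb hA hA' w u = v) ?_ ⟨0, Xb_zero hA hA' u⟩ v
  rintro x c ⟨w, hw⟩
  exact ⟨Pi.single c 1 + w, by rw [Xb_add, hw, Xb_single]⟩

lemma add_self_zero (w : Fin N → ZMod 2) : w + w = 0 := by
  funext c
  simp only [Pi.add_apply, Pi.zero_apply, CharTwo.add_self_eq_zero]

lemma Xb_fix_all (hA : IsAdinkra N nbr σ) (hA' : IsAdinkra N nbr σ') {z : Fin N → ZMod 2}
    {v₀ : V} (h : Xb hA hA' z v₀ = v₀) (v : V) : Xb hA hA' z v = v := by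
  obtain ⟨w, hw⟩ := Xb_trans hA hA' v₀ v
  calc Xb hA hA' z v = Xb hA hA' z (Xb hA hA' w v₀) := by rw [hw]
    _ = Xb hA hA' (z + w) v₀ := (Xb_add hA hA' z w v₀).symm
    _ = Xb hA hA' (w + z) v₀ := by rw [add_comm]
    _ = Xb hA hA' w (Xb hA hA' z v₀) := Xb_add hA hA' w z v₀
    _ = v := by rw [h, hw]

lemma Sg_const (hA : IsAdinkra N nbr σ) (hA' : IsAdinkra N nbr σ') {z : Fin N → ZMod 2}
    (hz : ∀ v, Xb hA hA' z v = v) (u₀ v : V) : Sg hA hA' z v = Sg hA hA' z u₀ := by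
  refine conn_ind hA (fun v => Sg hA hA' z v = Sg hA hA' z u₀) ?_ rfl v
  intro x c hx
  have h1 : Sg hA hA' (z + Pi.single c 1) x = Sg hA hA' z (nbr c x) * mu nbr σ σ' x c := by
    rw [Sg_add, Xb_single, Sg_single]
  have h2 : Sg hA hA' (Pi.single c 1 + z) x = mu nbr σ σ' x c * Sg hA hA' z x := by
    rw [Sg_add, Sg_single, hz x]
  rw [add_comm] at h1
  rw [h1] at h2
  have h3 : Sg hA hA' z (nbr c x) = Sg hA hA' z x := by
    rw [mul_comm (Sg hA hA' z (nbr c x))] at h2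
    exact mul_left_cancel h2
  rw [h3, hx]

open scoped Classical in
noncomputable def encU : ℤˣ → ZMod 2 := fun s => if s = 1 then 0 else 1

noncomputable def decU : ZMod 2 → ℤˣ := fun a => if a = 0 then 1 else -1

lemma decU_encU (s : ℤˣ) : decU (encU s) = s := by
  rcases Int.units_eq_one_or s with h | h <;> subst h <;> simp [encU, decU]

lemma decU_add (a b : ZMod 2) : decU (a + b) = decU a * decU b := by
  have h2 : ∀ x : ZMod 2, x = 0 ∨ x = 1 := by decide
  rcases h2 a with ha | ha <;> rcases h2 b with hb | hb <;> subst ha <;> subst hb <;>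
    simp [decU] <;> rfl

lemma encU_mul (s t : ℤˣ) : encU (s * t) = encU s + encU t := by
  rcases Int.units_eq_one_or s with h | h <;> rcases Int.units_eq_one_or t with h' | h' <;>
    subst h <;> subst h' <;> simp [encU] <;> rfl

/-- the subgroup of parity vectors acting trivially on `V` -/
noncomputable def Csub (hA : IsAdinkra N nbr σ) (hA' : IsAdinkra N nbr σ') :
    Submodule (ZMod 2) (Fin N → ZMod 2) where
  carrier := { z | ∀ v, Xb hA hA' z v = v }
  add_mem' := by
    intro a b ha hb v
    rw [Xb_add, hb, ha]
  zero_mem' := fun v => Xb_zero hA hA' v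
  smul_mem' := by
    intro r z hz
    have h2 : ∀ x : ZMod 2, x = 0 ∨ x = 1 := by decide
    rcases h2 r with hr | hr <;> subst hr
    · rw [zero_smul]; exact fun v => Xb_zero hA hA' v
    · rw [one_smul]; exact hz

lemma cancel_add (w w' : Fin N → ZMod 2) : w = (w + w') + w' := by
  rw [add_assoc, add_self_zero, add_zero]

lemma mem_Csub (hA : IsAdinkra N nbr σ) (hA' : IsAdinkra N nbr σ') (z : Fin N → ZMod 2) :
    z ∈ Csub hA hA' ↔ ∀ v, Xb hA hA' z v = v := Iff.rfl

/-- the sign character on `Csub` -/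
noncomputable def Kmap (hA : IsAdinkra N nbr σ) (hA' : IsAdinkra N nbr σ') (u₀ : V) :
    Csub hA hA' →ₗ[ZMod 2] ZMod 2 where
  toFun := fun z => encU (Sg hA hA' z.1 u₀)
  map_add' := by
    intro z z'
    have h2 : ∀ v, Xb hA hA' z'.1 v = v := z'.2
    show encU (Sg hA hA' (z.1 + z'.1) u₀) = _
    rw [Sg_add, h2 u₀, encU_mul]
  map_smul' := by
    intro r z
    have hr2 : ∀ x : ZMod 2, x = 0 ∨ x = 1 := by decide
    rcases hr2 r with hr | hr
    · rw [hr, zero_smul]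
      simp only [RingHom.id_apply, zero_smul]
      show encU (Sg hA hA' ((0 : Csub hA hA') : Fin N → ZMod 2) u₀) = 0
      have h1 : ((0 : Csub hA hA') : Fin N → ZMod 2) = 0 := rfl
      rw [h1, Sg_zero]
      simp [encU]
    · rw [hr, one_smul]
      simp only [RingHom.id_apply, one_smul]

/-- the switching-and-flip decomposition of the difference sign -/
lemma exists_switch (hA : IsAdinkra N nbr σ) (hA' : IsAdinkra N nbr σ') :
    ∃ (ε : V → ℤˣ) (δ : Fin N → ℤˣ), ∀ u c,
      ε (nbr c u) = δ c * ε u * mu nbr σ σ' u c := by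
  obtain ⟨u₀⟩ : Nonempty V := hA.connected.nonempty
  obtain ⟨g, hg⟩ := LinearMap.exists_extend (Kmap hA hA' u₀)
  have hgz : ∀ z (hz : z ∈ Csub hA hA'), g z = encU (Sg hA hA' z u₀) := by
    intro z hz
    exact LinearMap.congr_fun hg ⟨z, hz⟩
  choose wf hwfun using fun v => Xb_trans hA hA' u₀ v
  refine ⟨fun v => decU (g (wf v)) * Sg hA hA' (wf v) u₀,
    fun c => decU (g (Pi.single c 1)), ?_⟩
  intro u c
  obtain ⟨z, hzdef⟩ : ∃ z, z = wf (nbr c u) + (Pi.single c 1 + wf u) := ⟨_, rfl⟩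
  have hz1 : Xb hA hA' (Pi.single c 1 + wf u) u₀ = nbr c u := by
    rw [Xb_add, hwfun u, Xb_single]
  have h0 : Xb hA hA' z u₀ = u₀ := by
    have e1 : Xb hA hA' z u₀ = Xb hA hA' (wf (nbr c u)) (Xb hA hA' (wf (nbr c u)) u₀) := by
      rw [hzdef, Xb_add, hz1, hwfun (nbr c u)]
    rw [e1, ← Xb_add, add_self_zero, Xb_zero]
  have hzmem : z ∈ Csub hA hA' := fun v => Xb_fix_all hA hA' h0 v
  have hSgz : ∀ v, Sg hA hA' z v = Sg hA hA' z u₀ := fun v => Sg_const hA hA' hzmem u₀ v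
  have hwv_eq : wf (nbr c u) = z + (Pi.single c 1 + wf u) := by
    rw [hzdef]; exact cancel_add _ _
  have hSgwv : Sg hA hA' (wf (nbr c u)) u₀ =
      Sg hA hA' z u₀ * (mu nbr σ σ' u c * Sg hA hA' (wf u) u₀) := by
    rw [hwv_eq, Sg_add, hz1, hSgz, Sg_add, hwfun u, Sg_single]
  have hgwv : g (wf (nbr c u)) = g z + (g (Pi.single c 1) + g (wf u)) := by
    rw [hwv_eq, map_add, map_add]
  have hdz : decU (g z) = Sg hA hA' z u₀ := by rw [hgz z hzmem, decU_encU]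
  show decU (g (wf (nbr c u))) * Sg hA hA' (wf (nbr c u)) u₀ = _
  rw [hSgwv, hgwv, decU_add, decU_add, hdz]
  have hsq' : ((Sg hA hA' z u₀ : ℤˣ) : ℤ) * ((Sg hA hA' z u₀ : ℤˣ) : ℤ) = 1 := by
    have h := congrArg Units.val (Int.units_mul_self (Sg hA hA' z u₀))
    push_cast at h
    exact h
  apply Units.ext
  push_cast
  linear_combination (((decU (g (Pi.single c 1)) : ℤˣ) : ℤ) * ((decU (g (wf u)) : ℤˣ) : ℤ) *
    ((mu nbr σ σ' u c : ℤˣ) : ℤ) * ((Sg hA hA' (wf u) u₀ : ℤˣ) : ℤ)) * hsq'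

/-- the Clifford generator of color `d` -/
def Gam (nbr : Fin N → V → V) (σ : V → V → ℤ) (d : Fin N) : Matrix V V ℤ :=
  Matrix.of fun u w => if nbr d u = w then σ u w else 0

lemma Gam_sq (hA : IsAdinkra N nbr σ) (d : Fin N) :
    Gam nbr σ d * Gam nbr σ d = 1 := by
  ext u w
  rw [Matrix.mul_apply, Finset.sum_eq_single (nbr d u)]
  · simp only [Gam, Matrix.of_apply, if_pos rfl, if_true, eq_self_iff_true, hA.invol]
    by_cases h : u = w
    · subst h
      rw [if_pos rfl, Matrix.one_apply_eq, hA.symm (nbr d u) u, sq1 hA]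
    · rw [if_neg h, Matrix.one_apply_ne h, mul_zero]
  · intro b _ hb
    simp only [Gam, Matrix.of_apply, if_neg (Ne.symm hb), zero_mul]
  · intro h
    exact absurd (Finset.mem_univ _) h

lemma Gam_anticomm (hA : IsAdinkra N nbr σ) {d e : Fin N} (hde : d ≠ e) :
    Gam nbr σ d * Gam nbr σ e = -(Gam nbr σ e * Gam nbr σ d) := by
  ext u w
  rw [Matrix.mul_apply, Finset.sum_eq_single (nbr d u), Matrix.neg_apply,
    Matrix.mul_apply, Finset.sum_eq_single (nbr e u)]
  · simp only [Gam, Matrix.of_apply, if_pos rfl, if_true, eq_self_iff_true]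
    rw [commute_nbr hA d e u]
    have hs := sign_flip hA hde u
    rw [commute_nbr hA d e u] at hs
    by_cases h : nbr e (nbr d u) = w
    · subst h
      rw [if_pos rfl, if_pos rfl]
      exact hs
    · rw [if_neg h, if_neg h, mul_zero, mul_zero, neg_zero]
  · intro b _ hb
    simp only [Gam, Matrix.of_apply, if_neg (Ne.symm hb), zero_mul, neg_zero]
  · intro h
    exact absurd (Finset.mem_univ _) h
  · intro b _ hb
    simp only [Gam, Matrix.of_apply, if_neg (Ne.symm hb), zero_mul]
  · intro h
    exact absurd (Finset.mem_univ _) h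

lemma adj_eq_sum (hA : IsAdinkra N nbr σ) :
    adinkraAdj nbr σ = ∑ d, Gam nbr σ d := by
  ext u w
  rw [Matrix.sum_apply]
  simp only [adinkraAdj, Gam, Matrix.of_apply]
  by_cases hex : ∃ c, nbr c u = w
  · obtain ⟨c, hc⟩ := hex
    rw [if_pos ⟨c, hc⟩, Finset.sum_eq_single c]
    · rw [if_pos hc]
    · intro b _ hbc
      rw [if_neg (fun hh => hA.distinct b c u hbc (by rw [hh, hc]))]
    · intro h
      exact absurd (Finset.mem_univ _) h
  · rw [if_neg hex, Finset.sum_eq_zero]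
    intro d _
    rw [if_neg (fun hh => hex ⟨d, hh⟩)]

lemma exists_switch_int (hA : IsAdinkra N nbr σ) (hA' : IsAdinkra N nbr σ') :
    ∃ (ε : V → ℤˣ) (δ : Fin N → ℤˣ), ∀ u c,
      σ' u (nbr c u) = (δ c : ℤ) * (ε u : ℤ) * (ε (nbr c u) : ℤ) * σ u (nbr c u) := by
  obtain ⟨ε, δ, h⟩ := exists_switch hA hA'
  refine ⟨ε, δ, fun u c => ?_⟩
  have h1 := congrArg (Units.val) (h u c)
  push_cast at h1
  rw [coe_mu hA hA'] at h1
  rw [h1]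
  have s1 : (δ c : ℤ) * (δ c : ℤ) = 1 := by
    have := congrArg Units.val (Int.units_mul_self (δ c)); push_cast at this; exact this
  have s2 : (ε u : ℤ) * (ε u : ℤ) = 1 := by
    have := congrArg Units.val (Int.units_mul_self (ε u)); push_cast at this; exact this
  have s3 := sq1 hA u (nbr c u)
  linear_combination (-(σ' u (nbr c u)) * σ u (nbr c u) * σ u (nbr c u) *
      (ε u : ℤ) * (ε u : ℤ)) * s1 +
    (-(σ' u (nbr c u)) * σ u (nbr c u) * σ u (nbr c u)) * s2 + (-(σ' u (nbr c u))) * s3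

lemma gam_conj_adj (hA : IsAdinkra N nbr σ) (a : Fin N) :
    Gam nbr σ a * adinkraAdj nbr σ * Gam nbr σ a =
      (2 : ℤ) • Gam nbr σ a - adinkraAdj nbr σ := by
  rw [adj_eq_sum hA, Finset.mul_sum, Finset.sum_mul]
  have key : ∀ d : Fin N, Gam nbr σ a * Gam nbr σ d * Gam nbr σ a =
      if d = a then Gam nbr σ a else -(Gam nbr σ d) := by
    intro d
    by_cases h : d = a
    · subst h
      rw [if_pos rfl, Gam_sq hA, one_mul]
    · rw [if_neg h, Gam_anticomm hA (Ne.symm h), neg_mul, mul_assoc, Gam_sq hA, mul_one]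
  calc (∑ d, Gam nbr σ a * Gam nbr σ d * Gam nbr σ a)
      = ∑ d, ((if d = a then (2 : ℤ) • Gam nbr σ a else 0) - Gam nbr σ d) := by
        apply Finset.sum_congr rfl
        intro d _
        rw [key d]
        by_cases h : d = a
        · subst h; rw [if_pos rfl, if_pos rfl, two_smul]; abel
        · rw [if_neg h, if_neg h, zero_sub]
    _ = (2 : ℤ) • Gam nbr σ a - ∑ d, Gam nbr σ d := by
        rw [Finset.sum_sub_distrib, Finset.sum_ite_eq' Finset.univ a
          (fun _ => (2 : ℤ) • Gam nbr σ a), if_pos (Finset.mem_univ a)]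

lemma gam_conj_sum (hA : IsAdinkra N nbr σ) {s : Finset (Fin N)} {a : Fin N} (ha : a ∉ s) :
    Gam nbr σ a * (∑ d ∈ s, Gam nbr σ d) * Gam nbr σ a = -∑ d ∈ s, Gam nbr σ d := by
  rw [Finset.mul_sum, Finset.sum_mul, ← Finset.sum_neg_distrib]
  apply Finset.sum_congr rfl
  intro d hd
  have hda : d ≠ a := fun h => ha (h ▸ hd)
  rw [Gam_anticomm hA (Ne.symm hda), neg_mul, mul_assoc, Gam_sq hA, mul_one]

lemma flip_conj (hA : IsAdinkra N nbr σ) (S : Finset (Fin N)) :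
    ∃ W Wi : Matrix V V ℤ, W * Wi = 1 ∧ Wi * W = 1 ∧
      W * adinkraAdj nbr σ * Wi =
        (-1 : ℤ) ^ S.card • (adinkraAdj nbr σ - (2 : ℤ) • ∑ d ∈ S, Gam nbr σ d) := by
  classical
  induction S using Finset.induction_on with
  | empty =>
    refine ⟨1, 1, one_mul 1, one_mul 1, ?_⟩
    rw [one_mul, mul_one, Finset.card_empty, pow_zero, one_smul, Finset.sum_empty,
      smul_zero, sub_zero]
  | @insert a s ha ih =>
    obtain ⟨W, Wi, h1, h2, h3⟩ := ih
    refine ⟨Gam nbr σ a * W, Wi * Gam nbr σ a, ?_, ?_, ?_⟩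
    · calc Gam nbr σ a * W * (Wi * Gam nbr σ a)
          = Gam nbr σ a * (W * Wi) * Gam nbr σ a := by noncomm_ring
        _ = 1 := by rw [h1, mul_one, Gam_sq hA]
    · calc Wi * Gam nbr σ a * (Gam nbr σ a * W)
          = Wi * (Gam nbr σ a * Gam nbr σ a) * W := by noncomm_ring
        _ = 1 := by rw [Gam_sq hA, mul_one, h2]
    · have e1 : Gam nbr σ a * W * adinkraAdj nbr σ * (Wi * Gam nbr σ a) =
          Gam nbr σ a * (W * adinkraAdj nbr σ * Wi) * Gam nbr σ a := by noncomm_ring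
      rw [e1, h3, Matrix.mul_smul, Matrix.smul_mul]
      have e2 : Gam nbr σ a * (adinkraAdj nbr σ - (2:ℤ) • ∑ d ∈ s, Gam nbr σ d) * Gam nbr σ a
          = (2:ℤ) • Gam nbr σ a - adinkraAdj nbr σ + (2:ℤ) • ∑ d ∈ s, Gam nbr σ d := by
        rw [mul_sub, sub_mul, Matrix.mul_smul, Matrix.smul_mul, gam_conj_adj hA a,
          gam_conj_sum hA ha, smul_neg]
        abel
      rw [e2, Finset.card_insert_of_notMem ha, Finset.sum_insert ha, pow_succ, mul_smul]
      apply congrArg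
      rw [neg_one_smul, smul_add]
      abel

lemma Jm_facts (hA : IsAdinkra N nbr σ) (p : V → ZMod 2) (hp : ∀ c u, p (nbr c u) ≠ p u) :
    ∃ J : Matrix V V ℤ, J * J = 1 ∧
      ∀ s : Finset (Fin N), J * (adinkraAdj nbr σ - (2:ℤ) • ∑ d ∈ s, Gam nbr σ d) * J =
        -(adinkraAdj nbr σ - (2:ℤ) • ∑ d ∈ s, Gam nbr σ d) := by
  classical
  set f : V → ℤ := fun u => if p u = 0 then 1 else -1 with hf
  have hsq : ∀ u, f u * f u = 1 := by
    intro u; by_cases h : p u = 0 <;> simp [hf, h]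
  have hopp : ∀ c u, f (nbr c u) * f u = -1 := by
    intro c u
    have key : ∀ a b : ZMod 2, a ≠ b →
        (if a = 0 then (1:ℤ) else -1) * (if b = 0 then 1 else -1) = -1 := by decide
    exact key _ _ (hp c u)
  refine ⟨Matrix.diagonal f, ?_, ?_⟩
  · rw [Matrix.diagonal_mul_diagonal]
    have : (fun u => f u * f u) = fun _ => (1:ℤ) := funext hsq
    rw [this, Matrix.diagonal_one]
  · intro s
    have hG : ∀ (M : Matrix V V ℤ), (∀ u w, (¬ ∃ c, nbr c u = w) → M u w = 0) →
        Matrix.diagonal f * M * Matrix.diagonal f = -M := by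
      intro M hM
      ext u w
      rw [Matrix.neg_apply, Matrix.mul_diagonal, Matrix.diagonal_mul]
      by_cases hex : ∃ c, nbr c u = w
      · obtain ⟨c, hc⟩ := hex
        have h1 : f u * f w = -1 := by
          rw [← hc, mul_comm]
          exact hopp c u
        linear_combination (M u w) * h1
      · rw [hM u w hex]
        ring
    apply hG
    intro u w hex
    rw [Matrix.sub_apply, Matrix.smul_apply, Matrix.sum_apply]
    have h1 : adinkraAdj nbr σ u w = 0 := if_neg hex
    have h2 : ∀ d ∈ s, Gam nbr σ d u w = 0 := by
      intro d _
      exact if_neg (fun hh => hex ⟨d, hh⟩)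
    rw [h1, Finset.sum_eq_zero h2, smul_zero, sub_zero]

/-- the full conjugation: `A(σ') = U A(σ) Ui` with `U Ui = Ui U = 1` -/
lemma adj_conj (hA : IsAdinkra N nbr σ) (hA' : IsAdinkra N nbr σ') :
    ∃ U Ui : Matrix V V ℤ, U * Ui = 1 ∧ Ui * U = 1 ∧
      adinkraAdj nbr σ' = U * adinkraAdj nbr σ * Ui := by
  classical
  obtain ⟨ε, δ, hεδ⟩ := exists_switch_int hA hA'
  set S : Finset (Fin N) := Finset.univ.filter (fun c => (δ c : ℤ) = -1) with hS
  set F : Matrix V V ℤ := adinkraAdj nbr σ - (2:ℤ) • ∑ d ∈ S, Gam nbr σ d with hF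
  set Em : Matrix V V ℤ := Matrix.diagonal (fun u => (ε u : ℤ)) with hEm
  have hEsq : Em * Em = 1 := by
    rw [hEm, Matrix.diagonal_mul_diagonal]
    have : (fun u => (ε u : ℤ) * (ε u : ℤ)) = fun _ => (1:ℤ) := by
      funext u
      have := congrArg Units.val (Int.units_mul_self (ε u)); push_cast at this; exact this
    rw [this, Matrix.diagonal_one]
  -- step 1 : A' = Em * F * Em
  have hEA : adinkraAdj nbr σ' = Em * F * Em := by
    ext u w
    rw [hEm, Matrix.mul_diagonal, Matrix.diagonal_mul]
    by_cases hex : ∃ c, nbr c u = w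
    · obtain ⟨c, hc⟩ := hex
      have hFentry : F u w = (δ c : ℤ) * σ u w := by
        rw [hF, Matrix.sub_apply, Matrix.smul_apply, Matrix.sum_apply]
        have h1 : adinkraAdj nbr σ u w = σ u w := if_pos ⟨c, hc⟩
        have h2 : ∑ d ∈ S, Gam nbr σ d u w = if c ∈ S then σ u w else 0 := by
          by_cases hcS : c ∈ S
          · rw [if_pos hcS, Finset.sum_eq_single_of_mem c hcS]
            · exact if_pos hc
            · intro b _ hbc
              exact if_neg (fun hh => hA.distinct b c u hbc (by rw [hh, hc]))
          · rw [if_neg hcS, Finset.sum_eq_zero]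
            intro d hd
            have hdc : d ≠ c := fun h => hcS (h ▸ hd)
            exact if_neg (fun hh => hA.distinct d c u hdc (by rw [hh, hc]))
        rw [h1, h2]
        have hδval : (δ c : ℤ) = if c ∈ S then -1 else 1 := by
          by_cases hcS : c ∈ S
          · rw [if_pos hcS]
            exact (Finset.mem_filter.mp hcS).2
          · rw [if_neg hcS]
            rcases Int.units_eq_one_or (δ c) with h | h
            · rw [h]; rfl
            · exfalso
              apply hcS
              rw [hS]
              refine Finset.mem_filter.mpr ⟨Finset.mem_univ c, by rw [h]; rfl⟩
        by_cases hcS : c ∈ S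
        · rw [if_pos hcS, hδval, if_pos hcS, smul_eq_mul]; ring
        · rw [if_neg hcS, hδval, if_neg hcS, smul_eq_mul]; ring
      have hA'entry : adinkraAdj nbr σ' u w = σ' u w := if_pos ⟨c, hc⟩
      rw [hA'entry, hFentry, ← hc, hεδ u c]
      ring
    · have hFentry : F u w = 0 := by
        rw [hF, Matrix.sub_apply, Matrix.smul_apply, Matrix.sum_apply]
        have h1 : adinkraAdj nbr σ u w = 0 := if_neg hex
        rw [h1, Finset.sum_eq_zero, smul_zero, sub_zero]
        intro d _
        exact if_neg (fun hh => hex ⟨d, hh⟩)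
      have hA'entry : adinkraAdj nbr σ' u w = 0 := if_neg hex
      rw [hA'entry, hFentry]
      ring
  -- step 2 : F as conjugate of A
  obtain ⟨W, Wi, h1, h2, h3⟩ := flip_conj hA S
  obtain ⟨p, hp⟩ := hA.bipartite
  obtain ⟨J, hJsq, hJconj⟩ := Jm_facts hA p hp
  by_cases hpar : Even S.card
  · have hpow : ((-1 : ℤ)) ^ S.card = 1 := Even.neg_one_pow hpar
    rw [hpow, one_smul] at h3
    refine ⟨Em * W, Wi * Em, ?_, ?_, ?_⟩
    · calc Em * W * (Wi * Em) = Em * (W * Wi) * Em := by noncomm_ring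
        _ = 1 := by rw [h1, mul_one, hEsq]
    · calc Wi * Em * (Em * W) = Wi * (Em * Em) * W := by noncomm_ring
        _ = 1 := by rw [hEsq, mul_one, h2]
    · rw [hEA, hF, ← h3]; noncomm_ring
  · have hpow : ((-1 : ℤ)) ^ S.card = -1 :=
      Odd.neg_one_pow (Nat.not_even_iff_odd.mp hpar)
    rw [hpow] at h3
    have h3' : J * (W * adinkraAdj nbr σ * Wi) * J = F := by
      rw [h3, Matrix.mul_smul, Matrix.smul_mul, hJconj S, neg_one_smul, neg_neg, hF]
    refine ⟨Em * (J * W), Wi * J * Em, ?_, ?_, ?_⟩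
    · calc Em * (J * W) * (Wi * J * Em) = Em * (J * (W * Wi) * J) * Em := by noncomm_ring
        _ = 1 := by rw [h1, mul_one, hJsq, mul_one, hEsq]
    · calc Wi * J * Em * (Em * (J * W)) = Wi * (J * (Em * Em) * J) * W := by noncomm_ring
        _ = 1 := by rw [hEsq, mul_one, hJsq, mul_one, h2]
    · rw [hEA, ← h3']; noncomm_ring

/-- conjugation by a unimodular matrix induces an isomorphism of cokernels -/
lemma coker_iso_of_conj {L L' U Ui : Matrix V V ℤ} (hUUi : U * Ui = 1) (hUiU : Ui * U = 1)
    (h : L' = U * L * Ui) :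
    Nonempty (((V → ℤ) ⧸ LinearMap.range L.mulVecLin) ≃+
      ((V → ℤ) ⧸ LinearMap.range L'.mulVecLin)) := by
  let e : (V → ℤ) ≃ₗ[ℤ] (V → ℤ) :=
    LinearEquiv.ofLinear U.mulVecLin Ui.mulVecLin
      (by rw [← Matrix.mulVecLin_mul, hUUi, Matrix.mulVecLin_one])
      (by rw [← Matrix.mulVecLin_mul, hUiU, Matrix.mulVecLin_one])
  have key : Submodule.map (e : (V → ℤ) →ₗ[ℤ] (V → ℤ)) (LinearMap.range L.mulVecLin)
      = LinearMap.range L'.mulVecLin := by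
    have h1 : Submodule.map (e : (V → ℤ) →ₗ[ℤ] (V → ℤ)) (LinearMap.range L.mulVecLin)
        = LinearMap.range (U.mulVecLin ∘ₗ L.mulVecLin) := (LinearMap.range_comp _ _).symm
    have h2 : U * L = L' * U := by
      rw [h, mul_assoc, mul_assoc, hUiU, mul_one]
    rw [h1, ← Matrix.mulVecLin_mul, h2, Matrix.mulVecLin_mul, LinearMap.range_comp,
      LinearMap.range_eq_top.mpr (show Function.Surjective U.mulVecLin from e.surjective),
      Submodule.map_top]
  exact ⟨(Submodule.Quotient.equiv _ _ e key).toAddEquiv⟩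

end AdinkraProof

/-- The critical group of an Adinkra is independent of the signature: if two
`N`-colored Adinkras have the same underlying colored graph (given by the color
matchings `nbr`) but possibly different sign functions, their critical groups are
isomorphic. -/
theorem adinkra_critical_group_signature_independent {V : Type} [Fintype V]
    [DecidableEq V] {N : ℕ} (hN : 2 ≤ N) (nbr : Fin N → V → V)
    (σ σ' : V → V → ℤ) (hA : IsAdinkra N nbr σ) (hA' : IsAdinkra N nbr σ') :
    Nonempty
      (((V → ℤ) ⧸ LinearMap.range (adinkraLap nbr σ).mulVecLin) ≃+
        ((V → ℤ) ⧸ LinearMap.range (adinkraLap nbr σ').mulVecLin)) := by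
  obtain ⟨U, Ui, h1, h2, h3⟩ := AdinkraProof.adj_conj hA hA'
  have hL : adinkraLap nbr σ' = U * adinkraLap nbr σ * Ui := by
    rw [adinkraLap, adinkraLap, h3, mul_sub, sub_mul]
    have hid : U * ((N:ℤ) • (1 : Matrix V V ℤ)) * Ui = (N:ℤ) • 1 := by
      rw [Matrix.mul_smul, Matrix.smul_mul, mul_one, h1]
    rw [hid]
  exact AdinkraProof.coker_iso_of_conj h1 h2 hL
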